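/- Let d ≥ 1, let H = (V,E) be an R_d-independent graph, and let G = (V, E ∪ F) where F is a set of at most two edges of the complete graph on V not in E. Then G is R_{d+1}-independent. -/

import Mathlib

open scoped BigOperators

/-- The row of the `d`-dimensional rigidity matrix of a realisation `p : V → ℝ^d`
indexed by the (unordered) edge `e`. -/
noncomputable def rigRow (d : ℕ) {V : Type*} [DecidableEq V]
    (p : V → Fin d → ℝ) (e : Sym2 V) : V × Fin d → ℝ :=
  Sym2.lift
    ⟨fun u v wi =>
        (((if wi.1 = u then (1 : ℝ) else 0) - (if wi.1 = v then (1 : ℝ) else 0)) *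
          (p u wi.2 - p v wi.2)),
      fun u v => by funext wi; ring⟩ e

/-- A realisation is generic if the coordinates of the points form an algebraically
independent set over `ℚ`. -/
def Generic (d : ℕ) {V : Type*} (p : V → Fin d → ℝ) : Prop :=
  AlgebraicIndependent ℚ fun vi : V × Fin d => p vi.1 vi.2

/-- `rrk d p F` : the rank of the set of rows of the rigidity matrix of `(K_V, p)`
indexed by the edges in `F`.  For generic `p` this is the rank function `r_d` of
the generic `d`-dimensional rigidity matroid. -/
noncomputable def rrk (d : ℕ) {V : Type*} [Fintype V] [DecidableEq V]
    (p : V → Fin d → ℝ) (F : Set (Sym2 V)) : ℕ :=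
  Module.finrank ℝ (Submodule.span ℝ (rigRow d p '' F))

/-- `D` is a `k`-fold circuit (with respect to the realisation `p`) :
`r (D \ {f}) = r D` for every `f ∈ D`, and `r D = |D| - k`. -/
def IsKFoldCircuit (d : ℕ) {V : Type*} [Fintype V] [DecidableEq V]
    (p : V → Fin d → ℝ) (D : Finset (Sym2 V)) (k : ℕ) : Prop :=
  (∀ f ∈ D, rrk d p (↑D \ {f}) = rrk d p ↑D) ∧ rrk d p ↑D + k = D.card

/-- An `R_d`-circuit: `r C = |C| - 1` and `r (C \ {f}) = r C` for all `f ∈ C`. -/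
def IsCircuit (d : ℕ) {V : Type*} [Fintype V] [DecidableEq V]
    (p : V → Fin d → ℝ) (C : Finset (Sym2 V)) : Prop :=
  IsKFoldCircuit d p C 1

/-- `A` is a part of the principal partition of the `k`-fold circuit `D`:
the parts are the sets `D \ B` where `B` runs over the `(k-1)`-fold circuits
contained in `D`. -/
def IsPrincipalPart (d : ℕ) {V : Type*} [Fintype V] [DecidableEq V]
    (p : V → Fin d → ℝ) (D : Finset (Sym2 V)) (k : ℕ) (A : Finset (Sym2 V)) : Prop :=
  ∃ B ⊆ D, IsKFoldCircuit d p B (k - 1) ∧ A = D \ B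

/-- Closure in the rigidity matroid: all edges of `K_V` whose addition to `F`
does not increase the rank. -/
def rcl (d : ℕ) {V : Type*} [Fintype V] [DecidableEq V]
    (p : V → Fin d → ℝ) (F : Set (Sym2 V)) : Set (Sym2 V) :=
  {e | ¬ e.IsDiag ∧ rrk d p (insert e F) = rrk d p F}

/-- A `k`-fold circuit `D` with principal partition `A_1, …, A_ℓ` is balanced if
`r_d (⋂ i, cl_d (D \ A_i)) = ℓ - k`. -/
def IsBalanced (d : ℕ) {V : Type*} [Fintype V] [DecidableEq V]
    (p : V → Fin d → ℝ) (D : Finset (Sym2 V)) (k : ℕ) : Prop :=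
  rrk d p (⋂ A ∈ {A | IsPrincipalPart d p D k A}, rcl d p ↑(D \ A)) + k =
    Set.ncard {A | IsPrincipalPart d p D k A}

/-- A vertex is monochromatic if all edges of `D` incident with it lie in a single
part of the principal partition (and technicolour otherwise). -/
def Monochromatic (d : ℕ) {V : Type*} [Fintype V] [DecidableEq V]
    (p : V → Fin d → ℝ) (D : Finset (Sym2 V)) (k : ℕ) (w : V) : Prop :=
  ∃ A, IsPrincipalPart d p D k A ∧ ∀ e ∈ D, w ∈ e → e ∈ A

/-- The graph `(W, E)` is `R_d`-rigid: it is a complete graph on at most `d+1`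
vertices, or `r_d(E) = d|W| - (d+1 choose 2)`. -/
def IsRigidOn (d : ℕ) {V : Type*} [Fintype V] [DecidableEq V]
    (p : V → Fin d → ℝ) (W : Finset V) (E : Finset (Sym2 V)) : Prop :=
  (W.card ≤ d + 1 ∧ ∀ u ∈ W, ∀ w ∈ W, u ≠ w → s(u, w) ∈ E) ∨
    (rrk d p ↑E : ℤ) + ((d + 1).choose 2 : ℤ) = (d : ℤ) * (W.card : ℤ)

/-- The edge set of the cone of (the graph with edge set) `D` over a new vertex,
realised as `none : Option V`. -/
def coneEdges {V : Type*} [Fintype V] [DecidableEq V] (D : Finset (Sym2 V)) :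
    Finset (Sym2 (Option V)) :=
  D.image (Sym2.map Option.some) ∪
    Finset.univ.image fun u : V => s((Option.some u : Option V), (none : Option V))

/-- The degree of the vertex `w` in the edge set `D`. -/
def degIn {V : Type*} [Fintype V] [DecidableEq V] (D : Finset (Sym2 V)) (w : V) : ℕ :=
  (D.filter fun e => w ∈ e).card

/-- The set of vertices incident with an edge of `F`. -/
def esupp {V : Type*} [Fintype V] [DecidableEq V] (F : Finset (Sym2 V)) : Finset V :=
  Finset.univ.filter fun w => ∃ e ∈ F, w ∈ e


section RigidityAux
open Matrix

/-- Gram matrix of a finite family of vectors in `κ → ℝ`. -/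
noncomputable def gramMat {ι κ : Type*} [Fintype ι] [Fintype κ] (v : ι → κ → ℝ) :
    Matrix ι ι ℝ := Matrix.of v * (Matrix.of v)ᵀ

lemma gramMat_apply {ι κ : Type*} [Fintype ι] [Fintype κ] (v : ι → κ → ℝ) (i j : ι) :
    gramMat v i j = ∑ k, v i k * v j k := by
  simp [gramMat, Matrix.mul_apply]

lemma transpose_mulVec_eq_zero_iff {ι κ : Type*} [Fintype ι] [Fintype κ] (v : ι → κ → ℝ)
    (c : ι → ℝ) : (Matrix.of v)ᵀ.mulVec c = 0 ↔ ∑ i, c i • v i = 0 := by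
  constructor
  · intro h
    funext k
    have := congrFun h k
    simpa [Matrix.mulVec, dotProduct, Finset.sum_apply, mul_comm] using this
  · intro h
    funext k
    have := congrFun h k
    simpa [Matrix.mulVec, dotProduct, Finset.sum_apply, mul_comm] using this

lemma linearIndependent_iff_gram_det {ι κ : Type*} [Fintype ι] [Fintype κ] [DecidableEq ι]
    (v : ι → κ → ℝ) : LinearIndependent ℝ v ↔ (gramMat v).det ≠ 0 := by
  constructor
  · intro hli hdet
    obtain ⟨c, hc0, hc⟩ := Matrix.exists_mulVec_eq_zero_iff.2 hdet
    apply hc0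
    have hw : (Matrix.of v)ᵀ.mulVec c = 0 := by
      have h1 : c ⬝ᵥ (gramMat v).mulVec c = 0 := by rw [hc]; simp
      have h2 : c ⬝ᵥ (gramMat v).mulVec c
          = ((Matrix.of v)ᵀ.mulVec c) ⬝ᵥ ((Matrix.of v)ᵀ.mulVec c) := by
        rw [gramMat, ← Matrix.mulVec_mulVec, Matrix.dotProduct_mulVec,
          ← Matrix.mulVec_transpose]
      rw [h2] at h1
      exact dotProduct_self_eq_zero.1 h1
    have := Fintype.linearIndependent_iff.1 hli c ((transpose_mulVec_eq_zero_iff v c).1 hw)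
    funext i; exact this i
  · intro hdet
    rw [Fintype.linearIndependent_iff]
    intro c hc i
    by_contra hci
    apply hdet
    apply Matrix.exists_mulVec_eq_zero_iff.1
    refine ⟨c, fun h => hci (by rw [h]; rfl), ?_⟩
    rw [gramMat, ← Matrix.mulVec_mulVec, (transpose_mulVec_eq_zero_iff v c).2 hc]
    simp

noncomputable def polyRow (d : ℕ) {V : Type*} [DecidableEq V] (e : Sym2 V)
    (wi : V × Fin d) : MvPolynomial (V × Fin d) ℚ :=
  Sym2.lift
    ⟨fun u v =>
        (((if wi.1 = u then (1 : MvPolynomial (V × Fin d) ℚ) else 0) -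
          (if wi.1 = v then 1 else 0)) *
          (MvPolynomial.X (u, wi.2) - MvPolynomial.X (v, wi.2))),
      fun u v => by ring⟩ e

lemma aeval_polyRow (d : ℕ) {V : Type*} [DecidableEq V] (p : V → Fin d → ℝ) (e : Sym2 V)
    (wi : V × Fin d) :
    MvPolynomial.aeval (fun vi : V × Fin d => p vi.1 vi.2) (polyRow d e wi) =
      rigRow d p e wi := by
  induction e using Sym2.ind with
  | _ u v =>
    simp only [polyRow, rigRow, Sym2.lift_mk]
    simp [apply_ite (MvPolynomial.aeval (fun vi : V × Fin d => p vi.1 vi.2))]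

lemma linearIndependent_of_specialization (d : ℕ) {V : Type*} [Fintype V] [DecidableEq V]
    (s : Finset (Sym2 V)) (q₀ q : V → Fin d → ℝ)
    (hq : AlgebraicIndependent ℚ fun vi : V × Fin d => q vi.1 vi.2)
    (h0 : LinearIndependent ℝ fun e : s => rigRow d q₀ e) :
    LinearIndependent ℝ fun e : s => rigRow d q e := by
  classical
  set M : Matrix s s (MvPolynomial (V × Fin d) ℚ) :=
    Matrix.of fun e f : s => ∑ wi, polyRow d (e : Sym2 V) wi * polyRow d (f : Sym2 V) wi
    with hM
  have key : ∀ r : V → Fin d → ℝ,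
      MvPolynomial.aeval (fun vi : V × Fin d => r vi.1 vi.2) M.det =
        (gramMat fun e : s => rigRow d r e).det := by
    intro r
    have h1 : (MvPolynomial.aeval (fun vi : V × Fin d => r vi.1 vi.2)) M.det =
        (((MvPolynomial.aeval (fun vi : V × Fin d => r vi.1 vi.2)).toRingHom).mapMatrix M).det :=
      RingHom.map_det _ M
    rw [h1]
    congr 1
    ext e f
    simp [hM, RingHom.mapMatrix_apply, gramMat_apply, aeval_polyRow]
  rw [linearIndependent_iff_gram_det] at h0 ⊢
  rw [← key q] at *
  rw [← key q₀] at h0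
  intro hzero
  have hinj := algebraicIndependent_iff_injective_aeval.1 hq
  have : M.det = 0 := by
    apply hinj
    rw [map_zero, hzero]
  rw [this] at h0
  simp at h0

lemma rrk_eq_card_of_linearIndependent {d : ℕ} {V : Type*} [Fintype V] [DecidableEq V]
    {p : V → Fin d → ℝ} {s : Finset (Sym2 V)}
    (h : LinearIndependent ℝ fun e : s => rigRow d p e) :
    rrk d p ↑s = s.card := by
  have h1 := finrank_span_eq_card h
  rw [Fintype.card_coe] at h1
  rw [rrk, Set.image_eq_range (rigRow d p) (↑s : Set (Sym2 V))]
  exact h1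

lemma linearIndependent_of_rrk_eq_card {d : ℕ} {V : Type*} [Fintype V] [DecidableEq V]
    {p : V → Fin d → ℝ} {s : Finset (Sym2 V)}
    (h : rrk d p ↑s = s.card) :
    LinearIndependent ℝ fun e : s => rigRow d p e := by
  classical
  set S : Set (V × Fin d → ℝ) := rigRow d p '' ↑s with hS
  have hSfin : S.Finite := (s.finite_toSet).image _
  obtain ⟨b, hbS, hspan, hbli⟩ := exists_linearIndependent ℝ S
  have hbfin : b.Finite := hSfin.subset hbS
  have hrr : Module.finrank ℝ (Submodule.span ℝ S) = s.card := h
  have hcard_b : b.ncard = s.card := by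
    haveI := hbfin.fintype
    have h2 : Module.finrank ℝ (Submodule.span ℝ b) = s.card := by rw [hspan]; exact hrr
    rw [finrank_span_set_eq_card hbli] at h2
    rw [← h2, Set.ncard_eq_toFinset_card' b]
  have hScard : S.ncard ≤ s.card := by
    rw [hS]
    calc (rigRow d p '' ↑s).ncard ≤ (↑s : Set (Sym2 V)).ncard := Set.ncard_image_le s.finite_toSet
      _ = s.card := Set.ncard_coe_finset s
  have hbeq : b = S := Set.eq_of_subset_of_ncard_le hbS (by omega) hSfin
  subst hbeq
  -- injectivity of rigRow on s
  have himg : ↑(s.image (rigRow d p)) = S := by rw [hS, Finset.coe_image]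
  have hinj : Set.InjOn (rigRow d p) ↑s := by
    apply Finset.injOn_of_card_image_eq
    have : (s.image (rigRow d p)).card = S.ncard := by rw [← himg, Set.ncard_coe_finset]
    omega
  exact (linearIndepOn_iff_image hinj).2 (by rw [← hS]; exact hbli)

section PairDep
variable {n : Type*} [Fintype n] [DecidableEq n]

/-- Two vectors are `pairDep` if some nontrivial combination vanishes. -/
@[reducible] def pairDep {α : Type*} [AddCommGroup α] [Module ℝ α] (x y : α) : Prop :=
  ∃ c : ℝ × ℝ, c ≠ 0 ∧ c.1 • x + c.2 • y = 0

lemma pairDep_symm {α : Type*} [AddCommGroup α] [Module ℝ α] {x y : α}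
    (h : pairDep x y) : pairDep y x := by
  obtain ⟨⟨a, b⟩, hne, hab⟩ := h
  exact ⟨(b, a), fun hc => hne (by simpa [Prod.ext_iff] using
    ⟨congrArg Prod.snd hc, congrArg Prod.fst hc⟩), by rw [add_comm]; exact hab⟩

lemma pairDep.exists_smul {α : Type*} [AddCommGroup α] [Module ℝ α] {x y : α}
    (h : pairDep x y) (hx : x ≠ 0) : ∃ c : ℝ, y = c • x := by
  obtain ⟨⟨a, b⟩, hne, hab⟩ := h
  by_cases hb : b = 0
  · subst hb
    have ha : a ≠ 0 := fun h0 => hne (by simp [Prod.ext_iff, h0])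
    simp only [smul_zero, zero_smul, add_zero] at hab
    exact absurd ((smul_eq_zero.1 hab).resolve_left ha) hx
  · refine ⟨-(b⁻¹ * a), ?_⟩
    have h1 : b • y = -(a • x) := by linear_combination (norm := module) hab
    have h2 := congrArg (fun z => b⁻¹ • z) h1
    simp only [smul_smul, inv_mul_cancel₀ hb, one_smul] at h2
    rw [h2, smul_neg, smul_smul, ← neg_smul]

lemma pairDep_of_not_linearIndependent {α : Type*} [AddCommGroup α] [Module ℝ α] {x y : α}
    (h : ¬ LinearIndependent ℝ ![x, y]) : pairDep x y := by
  rw [LinearIndependent.pair_iff] at h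
  push_neg at h
  obtain ⟨a, b, hab, hne⟩ := h
  have hp : ((a, b) : ℝ × ℝ) ≠ 0 := by
    intro hc
    rw [Prod.ext_iff] at hc
    exact hne hc.1 hc.2
  exact ⟨(a, b), hp, hab⟩

lemma eq_coeff_of_pairDep_sum {α : Type*} [AddCommGroup α] [Module ℝ α] {x y : α}
    (hxy : LinearIndependent ℝ ![x, y]) {c c' : ℝ}
    (h : pairDep (x + y) (c • x + c' • y)) : c = c' := by
  obtain ⟨⟨a, b⟩, hne, hab⟩ := h
  have key : (a + b * c) • x + (a + b * c') • y = 0 := by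
    linear_combination (norm := module) hab
  obtain ⟨h1, h2⟩ := LinearIndependent.pair_iff.1 hxy _ _ key
  by_cases hb : b = 0
  · subst hb
    simp only [mul_zero, zero_mul, add_zero] at h1
    subst h1
    simp at hne
  · have : b * c = b * c' := by linarith
    exact mul_left_cancel₀ hb this

/-- the `s`-th column of a matrix, as a vector -/
def col' (A : Matrix n n ℝ) (s : n) : n → ℝ := fun w => A w s

lemma mulVecSingleOne (A : Matrix n n ℝ) (u : n) :
    A *ᵥ Pi.single u 1 = col' A u := by
  funext w
  simp [Matrix.mulVec_single, col']

lemma mulVec_single_add (A : Matrix n n ℝ) (u t : n) :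
    A *ᵥ (Pi.single u 1 + Pi.single t 1) = col' A u + col' A t := by
  rw [Matrix.mulVec_add, mulVecSingleOne, mulVecSingleOne]

section SymPair
variable {A B : Matrix n n ℝ}

/-- propagation step: if columns `x`, `y` of `A` are independent and the `x`-column
of `B` is `c` times that of `A`, the same holds at `y`. -/
lemma col_step (hdep : ∀ h : n → ℝ, pairDep (A *ᵥ h) (B *ᵥ h)) {x y : n}
    (hxy : LinearIndependent ℝ ![col' A x, col' A y]) {c : ℝ}
    (hx : col' B x = c • col' A x) : col' B y = c • col' A y := by
  have hAy : col' A y ≠ 0 := by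
    intro h0
    exact (hxy.ne_zero 1) (by simpa using h0)
  have hpd : pairDep (col' A y) (col' B y) := by
    have := hdep (Pi.single y 1)
    rwa [mulVecSingleOne, mulVecSingleOne] at this
  obtain ⟨cy, hcy⟩ := hpd.exists_smul hAy
  have hsum := hdep (Pi.single x 1 + Pi.single y 1)
  rw [mulVec_single_add, mulVec_single_add, hx, hcy] at hsum
  have : c = cy := eq_coeff_of_pairDep_sum hxy hsum
  rw [hcy, this]

/-- if `A` has two independent columns then the columns of `B` are a fixed multiple
of those of `A`. -/
lemma col_prop (hdep : ∀ h : n → ℝ, pairDep (A *ᵥ h) (B *ᵥ h)) {u t : n}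
    (hut : LinearIndependent ℝ ![col' A u, col' A t]) :
    ∃ c : ℝ, ∀ s, col' B s = c • col' A s := by
  have hAu : col' A u ≠ 0 := fun h0 => (hut.ne_zero 0) (by simpa using h0)
  have hAt : col' A t ≠ 0 := fun h0 => (hut.ne_zero 1) (by simpa using h0)
  have hdepcol : ∀ s, pairDep (col' A s) (col' B s) := by
    intro s
    have := hdep (Pi.single s 1)
    rwa [mulVecSingleOne, mulVecSingleOne] at this
  obtain ⟨c, hc⟩ := (hdepcol u).exists_smul hAu
  refine ⟨c, fun s => ?_⟩
  by_cases hAs : col' A s = 0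
  · -- show col' B s = 0
    rw [hAs, smul_zero]
    -- use sums with u and with t
    have h1 := hdep (Pi.single u 1 + Pi.single s 1)
    rw [mulVec_single_add, mulVec_single_add, hAs, add_zero] at h1
    obtain ⟨γ, hγ⟩ := h1.exists_smul hAu
    have h2 := hdep (Pi.single t 1 + Pi.single s 1)
    rw [mulVec_single_add, mulVec_single_add, hAs, add_zero] at h2
    obtain ⟨ct, hct⟩ := (hdepcol t).exists_smul hAt
    obtain ⟨δ, hδ⟩ := h2.exists_smul hAt
    -- col' B s = (γ - c) • col' A u = (δ - ct) • col' A t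
    have e1 : col' B s = (γ - c) • col' A u := by
      have : col' B u + col' B s = γ • col' A u := hγ
      rw [hc] at this
      linear_combination (norm := module) this
    have e2 : col' B s = (δ - ct) • col' A t := by
      have : col' B t + col' B s = δ • col' A t := hδ
      rw [hct] at this
      linear_combination (norm := module) this
    have : (γ - c) • col' A u + (-(δ - ct)) • col' A t = 0 := by
      rw [← e1]
      linear_combination (norm := module) e2
    obtain ⟨z1, _⟩ := LinearIndependent.pair_iff.1 hut _ _ this
    rw [e1, z1, zero_smul]
  · by_cases hus : LinearIndependent ℝ ![col' A u, col' A s]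
    · exact col_step hdep hus hc
    · -- col' A s is a multiple of col' A u; then (t, s) are independent
      obtain ⟨ρ, hρ⟩ := (pairDep_of_not_linearIndependent hus).exists_smul hAu
      have hρ0 : ρ ≠ 0 := by
        intro h0
        rw [h0, zero_smul] at hρ
        exact hAs hρ
      have hts : LinearIndependent ℝ ![col' A t, col' A s] := by
        by_contra hts
        obtain ⟨τ, hτ⟩ := (pairDep_of_not_linearIndependent hts).exists_smul hAt
        -- ρ • col'Au = τ • col'At contradicts hut
        have : ρ • col' A u + (-τ) • col' A t = 0 := by
          rw [← hρ, hτ]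
          module
        exact hρ0 (LinearIndependent.pair_iff.1 hut _ _ this).1
      have hct : col' B t = c • col' A t := col_step hdep hut hc
      exact col_step hdep hts hct

end SymPair

section SymPair2
variable {A B : Matrix n n ℝ}

lemma rank_one_structure (hA : ∀ w s, A w s = A s w) (hA0 : A ≠ 0)
    (hcols : ∀ u t : n, ¬ LinearIndependent ℝ ![col' A u, col' A t]) :
    ∃ (κ : ℝ) (a : n → ℝ), κ ≠ 0 ∧ a ≠ 0 ∧ ∀ w s, A w s = κ * a s * a w := by
  have : ∃ u, col' A u ≠ 0 := by
    by_contra hall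
    push_neg at hall
    apply hA0
    ext w s
    exact congrFun (hall s) w
  obtain ⟨u, ha⟩ := this
  set a : n → ℝ := col' A u with ha_def
  have hd : ∀ s, ∃ ds : ℝ, col' A s = ds • a := fun s =>
    (pairDep_of_not_linearIndependent (hcols u s)).exists_smul ha
  choose d hdspec using hd
  have hsym : ∀ s t, d s * a t = d t * a s := by
    intro s t
    have h1 : col' A s t = d s * a t := by rw [hdspec s]; simp
    have h2 : col' A t s = d t * a s := by rw [hdspec t]; simp
    rw [← h1, ← h2, col', col', hA]
  obtain ⟨t₀, hat₀⟩ : ∃ t₀, a t₀ ≠ 0 := by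
    by_contra hall
    push_neg at hall
    exact ha (funext hall)
  set κ : ℝ := d t₀ / a t₀ with hκ
  have hds : ∀ s, d s = κ * a s := by
    intro s
    have := hsym s t₀
    rw [hκ, div_mul_eq_mul_div, eq_div_iff hat₀]
    linarith [hsym s t₀]
  have hentry : ∀ w s, A w s = κ * a s * a w := by
    intro w s
    have : A w s = d s * a w := by
      have := congrFun (hdspec s) w
      simpa [col'] using this
    rw [this, hds s]
  refine ⟨κ, a, ?_, ha, hentry⟩
  intro h0
  apply hA0
  ext w s
  simp [hentry w s, h0]

lemma sym_pair (hA : ∀ w s, A w s = A s w) (hB : ∀ w s, B w s = B s w)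
    (hdep : ∀ h : n → ℝ, pairDep (A *ᵥ h) (B *ᵥ h)) :
    ∃ c : ℝ × ℝ, c ≠ 0 ∧ c.1 • A + c.2 • B = 0 := by
  by_cases hA0 : A = 0
  · exact ⟨(1, 0), by simp [Prod.ext_iff], by simp [hA0]⟩
  by_cases hB0 : B = 0
  · exact ⟨(0, 1), by simp [Prod.ext_iff], by simp [hB0]⟩
  by_cases h1 : ∃ u t, LinearIndependent ℝ ![col' A u, col' A t]
  · obtain ⟨u, t, hut⟩ := h1
    obtain ⟨c, hc⟩ := col_prop hdep hut
    refine ⟨(c, -1), by simp [Prod.ext_iff], ?_⟩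
    ext w s
    have := congrFun (hc s) w
    simp only [col', Pi.smul_apply, smul_eq_mul] at this
    simp only [Matrix.add_apply, Matrix.smul_apply, smul_eq_mul, Matrix.zero_apply]
    rw [this]; ring
  by_cases h2 : ∃ u t, LinearIndependent ℝ ![col' B u, col' B t]
  · obtain ⟨u, t, hut⟩ := h2
    obtain ⟨c, hc⟩ := col_prop (fun h => pairDep_symm (hdep h)) hut
    refine ⟨(-1, c), by simp [Prod.ext_iff], ?_⟩
    ext w s
    have := congrFun (hc s) w
    simp only [col', Pi.smul_apply, smul_eq_mul] at this
    simp only [Matrix.add_apply, Matrix.smul_apply, smul_eq_mul, Matrix.zero_apply]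
    rw [this]; ring
  push_neg at h1 h2
  obtain ⟨κ, a, hκ, ha, haA⟩ := rank_one_structure hA hA0 h1
  obtain ⟨κ', b, hκ', hb, hbB⟩ := rank_one_structure hB hB0 h2
  -- find h with a ⬝ᵥ h ≠ 0 and b ⬝ᵥ h ≠ 0
  have haa : a ⬝ᵥ a ≠ 0 := fun h0 => ha (dotProduct_self_eq_zero.1 h0)
  have hbb : b ⬝ᵥ b ≠ 0 := fun h0 => hb (dotProduct_self_eq_zero.1 h0)
  obtain ⟨h, hah, hbh⟩ : ∃ h : n → ℝ, a ⬝ᵥ h ≠ 0 ∧ b ⬝ᵥ h ≠ 0 := by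
    by_cases hab : a ⬝ᵥ b = 0
    · refine ⟨a + b, ?_, ?_⟩
      · rwa [dotProduct_add, hab, add_zero]
      · rw [dotProduct_add, dotProduct_comm b a, hab, zero_add]
        exact hbb
    · exact ⟨b, hab, hbb⟩
  have hAv : A *ᵥ h = (κ * (a ⬝ᵥ h)) • a := by
    funext w
    simp only [Matrix.mulVec, dotProduct, Pi.smul_apply, smul_eq_mul]
    calc ∑ s, A w s * h s = ∑ s, (κ * a w) * (a s * h s) := by
          refine Finset.sum_congr rfl fun s _ => ?_
          rw [haA w s]; ring
      _ = (κ * a w) * ∑ s, a s * h s := by rw [Finset.mul_sum]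
      _ = κ * (∑ s, a s * h s) * a w := by ring
  have hBv : B *ᵥ h = (κ' * (b ⬝ᵥ h)) • b := by
    funext w
    simp only [Matrix.mulVec, dotProduct, Pi.smul_apply, smul_eq_mul]
    calc ∑ s, B w s * h s = ∑ s, (κ' * b w) * (b s * h s) := by
          refine Finset.sum_congr rfl fun s _ => ?_
          rw [hbB w s]; ring
      _ = (κ' * b w) * ∑ s, b s * h s := by rw [Finset.mul_sum]
      _ = κ' * (∑ s, b s * h s) * b w := by ring
  have hα : κ * (a ⬝ᵥ h) ≠ 0 := mul_ne_zero hκ hah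
  have hβ : κ' * (b ⬝ᵥ h) ≠ 0 := mul_ne_zero hκ' hbh
  have hAvne : A *ᵥ h ≠ 0 := by
    rw [hAv]
    exact smul_ne_zero hα ha
  obtain ⟨σ, hσ⟩ := (hdep h).exists_smul hAvne
  -- b = ρ • a
  set ρ : ℝ := (κ' * (b ⬝ᵥ h))⁻¹ * (σ * (κ * (a ⬝ᵥ h))) with hρdef
  have hba : b = ρ • a := by
    have h3 : (κ' * (b ⬝ᵥ h)) • b = (σ * (κ * (a ⬝ᵥ h))) • a := by
      rw [hBv, hAv] at hσ
      rw [hσ, smul_smul]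
    have h4 := congrArg (fun z => (κ' * (b ⬝ᵥ h))⁻¹ • z) h3
    simp only [smul_smul, inv_mul_cancel₀ hβ, one_smul] at h4
    rw [hρdef]
    linear_combination (norm := module) h4
  have hρ : ρ ≠ 0 := fun h0 => hb (by rw [hba, h0, zero_smul])
  refine ⟨(κ' * ρ ^ 2, -κ), ?_, ?_⟩
  · intro h0
    rw [Prod.ext_iff] at h0
    exact hκ (neg_eq_zero.1 h0.2)
  · ext w s
    simp only [Matrix.add_apply, Matrix.smul_apply, smul_eq_mul, Matrix.zero_apply]
    rw [haA w s, hbB w s, hba]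
    simp only [Pi.smul_apply, smul_eq_mul]
    ring

end SymPair2

end PairDep

section Glue
variable {V : Type*} [Fintype V] [DecidableEq V] {d : ℕ}

/-- glue a last coordinate onto a `d`-dimensional realisation -/
noncomputable def glue (d : ℕ) (p : V → Fin d → ℝ) (h : V → ℝ) : V → Fin (d+1) → ℝ :=
  fun v => Fin.snoc (p v) (h v)

/-- the `h`-weighted incidence row of an edge -/
noncomputable def Nrow (h : V → ℝ) (e : Sym2 V) : V → ℝ := fun w =>
  Sym2.lift
    ⟨fun u v => ((if w = u then (1 : ℝ) else 0) - (if w = v then 1 else 0)) * (h u - h v),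
      fun u v => by ring⟩ e

lemma Nrow_mk (h : V → ℝ) (u v w : V) :
    Nrow h s(u, v) w =
      ((if w = u then (1 : ℝ) else 0) - (if w = v then 1 else 0)) * (h u - h v) := rfl

lemma rigRow_glue_castSucc (p : V → Fin d → ℝ) (h : V → ℝ) (e : Sym2 V) (w : V) (j : Fin d) :
    rigRow (d+1) (glue d p h) e (w, j.castSucc) = rigRow d p e (w, j) := by
  induction e using Sym2.ind with
  | _ u v => simp [rigRow, glue, Fin.snoc_castSucc]

lemma rigRow_glue_last (p : V → Fin d → ℝ) (h : V → ℝ) (e : Sym2 V) (w : V) :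
    rigRow (d+1) (glue d p h) e (w, Fin.last d) = Nrow h e w := by
  induction e using Sym2.ind with
  | _ u v => simp [rigRow, glue, Nrow, Fin.snoc_last]

variable {s : Finset (Sym2 V)}

/-- the weighted-Laplacian-type matrix of a stress coefficient vector -/
noncomputable def Lmat (s : Finset (Sym2 V)) (lam : {x // x ∈ s} → ℝ) : Matrix V V ℝ :=
  Matrix.of fun w w' => ∑ e : {x // x ∈ s}, lam e * Nrow (Pi.single w' 1) (e : Sym2 V) w

lemma Nrow_single_expand (h : V → ℝ) (e : Sym2 V) (w : V) :
    Nrow h e w = ∑ w', Nrow (Pi.single w' 1) e w * h w' := by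
  induction e using Sym2.ind with
  | _ u v =>
    simp only [Nrow_mk, Pi.single_apply]
    rw [Finset.sum_congr rfl (fun w' _ => by ring :
      ∀ w' ∈ Finset.univ,
        ((if w = u then (1:ℝ) else 0) - if w = v then 1 else 0) *
          ((if u = w' then (1:ℝ) else 0) - if v = w' then 1 else 0) * h w' =
        ((if w = u then (1:ℝ) else 0) - if w = v then 1 else 0) *
          ((if u = w' then (1:ℝ) else 0) * h w' - (if v = w' then 1 else 0) * h w'))]
    rw [← Finset.mul_sum]
    congr 1
    rw [Finset.sum_sub_distrib]
    simp [Finset.sum_ite_eq]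

lemma Lmat_mulVec (lam : {x // x ∈ s} → ℝ) (h : V → ℝ) :
    (Lmat s lam) *ᵥ h = fun w => ∑ e : {x // x ∈ s}, lam e * Nrow h (e : Sym2 V) w := by
  funext w
  simp only [Matrix.mulVec, dotProduct, Lmat, Matrix.of_apply]
  calc ∑ w', (∑ e : {x // x ∈ s}, lam e * Nrow (Pi.single w' 1) (e : Sym2 V) w) * h w'
      = ∑ w', ∑ e : {x // x ∈ s}, lam e * Nrow (Pi.single w' 1) (e : Sym2 V) w * h w' := by
        refine Finset.sum_congr rfl fun w' _ => ?_
        rw [Finset.sum_mul]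
    _ = ∑ e : {x // x ∈ s}, ∑ w', lam e * Nrow (Pi.single w' 1) (e : Sym2 V) w * h w' :=
        Finset.sum_comm
    _ = ∑ e : {x // x ∈ s}, lam e * Nrow h (e : Sym2 V) w := by
        refine Finset.sum_congr rfl fun e _ => ?_
        rw [Nrow_single_expand h (e : Sym2 V) w, Finset.mul_sum]
        refine Finset.sum_congr rfl fun w' _ => ?_
        ring

lemma Lmat_symm (lam : {x // x ∈ s} → ℝ) (w w' : V) :
    Lmat s lam w w' = Lmat s lam w' w := by
  simp only [Lmat, Matrix.of_apply]
  refine Finset.sum_congr rfl fun e _ => ?_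
  congr 1
  induction (e : Sym2 V) using Sym2.ind with
  | _ u v =>
    simp only [Nrow_mk, Pi.single_apply]
    have h1 : ∀ a b : V, (if a = b then (1:ℝ) else 0) = (if b = a then 1 else 0) := by
      intro a b
      by_cases hab : a = b <;> simp [hab, Ne.symm, eq_comm]
    rw [h1 u w', h1 v w', h1 w u, h1 w v]
    ring

lemma Nrow_single_vanish {u v a b : V} (hab : a ≠ b) (huv : u ≠ v)
    (hne : s(a, b) ≠ s(u, v)) : Nrow (Pi.single u 1) s(a, b) v = 0 := by
  simp only [Nrow_mk, Pi.single_apply]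
  by_cases hva : v = a
  · subst hva
    have hbu : b ≠ u := by
      intro h
      subst h
      exact hne Sym2.eq_swap
    simp [hab, hbu, Ne.symm huv]
  · by_cases hvb : v = b
    · subst hvb
      have hau : a ≠ u := by
        intro h
        subst h
        exact hne rfl
      simp [hva, hau, Ne.symm huv]
    · simp [hva, hvb]

lemma sym2_exists_rep : ∀ z : Sym2 V, ∃ u v : V, z = s(u, v) := by
  intro z
  induction z using Sym2.ind with
  | _ u v => exact ⟨u, v, rfl⟩

lemma lam_zero_of_Nsum (hs : ∀ e ∈ s, ¬ e.IsDiag) (lam : {x // x ∈ s} → ℝ)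
    (hz : ∀ h : V → ℝ, ∀ w : V,
      (∑ e : {x // x ∈ s}, lam e * Nrow h (e : Sym2 V) w) = 0) :
    lam = 0 := by
  funext e₀
  obtain ⟨u, v, hrep⟩ := sym2_exists_rep (e₀ : Sym2 V)
  have huv : u ≠ v := by
    have := hs _ e₀.2
    rw [hrep] at this
    simpa [Sym2.mk_isDiag_iff] using this
  have h0 := hz (Pi.single u 1) v
  rw [Finset.sum_eq_single e₀ ?side ?notmem] at h0
  case side =>
    intro f _ hfe
    obtain ⟨a, b, hfrep⟩ := sym2_exists_rep (f : Sym2 V)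
    have hab : a ≠ b := by
      have := hs _ f.2
      rw [hfrep] at this
      simpa [Sym2.mk_isDiag_iff] using this
    have hvals : (f : Sym2 V) ≠ (e₀ : Sym2 V) := fun h => hfe (Subtype.ext h)
    rw [hfrep, Nrow_single_vanish hab huv (by rw [← hfrep, ← hrep]; exact hvals), mul_zero]
  case notmem => simp
  rw [hrep] at h0
  have hval : Nrow (Pi.single u 1) s(u, v) v = -1 := by
    simp [Nrow_mk, Pi.single_apply, huv, Ne.symm huv]
  rw [hval] at h0
  have : lam e₀ = 0 := by linarith
  simpa using this

lemma Lmat_eq_zero_imp (hs : ∀ e ∈ s, ¬ e.IsDiag) (lam : {x // x ∈ s} → ℝ)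
    (h0 : Lmat s lam = 0) : lam = 0 := by
  apply lam_zero_of_Nsum hs
  intro h w
  have h1 : Lmat s lam *ᵥ h = 0 := by rw [h0]; simp
  rw [Lmat_mulVec] at h1
  simpa using congrFun h1 w

lemma Lmat_smul_add (c₀ c₁ : ℝ) (l0 l1 : {x // x ∈ s} → ℝ) :
    Lmat s (c₀ • l0 + c₁ • l1) = c₀ • Lmat s l0 + c₁ • Lmat s l1 := by
  ext w w'
  simp only [Lmat, Matrix.of_apply, Matrix.add_apply, Matrix.smul_apply, smul_eq_mul,
    Pi.add_apply, Pi.smul_apply]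
  rw [Finset.mul_sum, Finset.mul_sum, ← Finset.sum_add_distrib]
  refine Finset.sum_congr rfl fun e _ => ?_
  ring

end Glue

end RigidityAux

section MainAux
open Matrix
variable {V : Type*} [Fintype V] [DecidableEq V]

lemma exists_glue_independent (d : ℕ) (E F : Finset (Sym2 V))
    (hEsimple : ∀ e ∈ E, ¬ e.IsDiag) (hFsimple : ∀ e ∈ F, ¬ e.IsDiag)
    (hdisj : Disjoint E F) (hFcard : F.card ≤ 2)
    (p : V → Fin d → ℝ)
    (hindE : LinearIndependent ℝ fun e : E => rigRow d p e) :
    ∃ h : V → ℝ,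
      LinearIndependent ℝ fun e : (E ∪ F : Finset (Sym2 V)) =>
        rigRow (d+1) (glue d p h) e := by
  classical
  set s : Finset (Sym2 V) := E ∪ F with hs_def
  have hssimple : ∀ e ∈ s, ¬ e.IsDiag := by
    intro e he
    rcases Finset.mem_union.1 he with h | h
    · exact hEsimple e h
    · exact hFsimple e h
  by_contra hcon
  push_neg at hcon
  -- the d-dimensional combination map
  set T : ({x // x ∈ s} → ℝ) →ₗ[ℝ] (V × Fin d → ℝ) :=
    Fintype.linearCombination ℝ (fun e : {x // x ∈ s} => rigRow d p (e : Sym2 V)) with hT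
  have hTapply : ∀ lam : {x // x ∈ s} → ℝ,
      T lam = ∑ e : {x // x ∈ s}, lam e • rigRow d p (e : Sym2 V) := by
    intro lam
    simp [hT, Fintype.linearCombination_apply]
  -- the kernel has dimension at most 2
  have hker : Module.finrank ℝ ↥(LinearMap.ker T) ≤ 2 := by
    have h1 := LinearMap.finrank_range_add_finrank_ker T
    have hdom : Module.finrank ℝ ({x // x ∈ s} → ℝ) = s.card := by
      simp [Module.finrank_pi, Fintype.card_coe]
    have hcards : s.card = E.card + F.card := Finset.card_union_of_disjoint hdisj
    have hspanle : Submodule.span ℝ (rigRow d p '' ↑E) ≤ LinearMap.range T := by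
      rw [Submodule.span_le]
      rintro x ⟨e, heE, rfl⟩
      have hes : e ∈ s := Finset.mem_union_left _ heE
      refine ⟨Pi.single (⟨e, hes⟩ : {x // x ∈ s}) 1, ?_⟩
      rw [hTapply]
      rw [Finset.sum_eq_single (⟨e, hes⟩ : {x // x ∈ s})]
      · simp
      · intro f _ hf
        rw [Pi.single_apply, if_neg hf, zero_smul]
      · simp
    have hrankE : Module.finrank ℝ ↥(Submodule.span ℝ (rigRow d p '' ↑E)) = E.card := by
      rw [Set.image_eq_range (rigRow d p) (↑E : Set (Sym2 V))]
      have h2 := finrank_span_eq_card hindE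
      rw [Fintype.card_coe] at h2
      exact h2
    have hle : E.card ≤ Module.finrank ℝ ↥(LinearMap.range T) := by
      rw [← hrankE]
      exact Submodule.finrank_mono hspanle
    omega
  -- each h gives a nonzero dependence lying in ker T and killing the Nrow part
  have hdep : ∀ h : V → ℝ, ∃ lam : {x // x ∈ s} → ℝ, lam ≠ 0 ∧ lam ∈ LinearMap.ker T ∧
      ∀ w : V, (∑ e : {x // x ∈ s}, lam e * Nrow h (e : Sym2 V) w) = 0 := by
    intro h
    obtain ⟨g, hg0, e₀, hge⟩ := Fintype.not_linearIndependent_iff.1 (hcon h)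
    refine ⟨g, fun hgz => hge (by rw [hgz]; rfl), ?_, ?_⟩
    · rw [LinearMap.mem_ker, hTapply]
      funext wj
      obtain ⟨w, j⟩ := wj
      have := congrFun hg0 (w, j.castSucc)
      simp only [Finset.sum_apply, Pi.smul_apply, smul_eq_mul, Pi.zero_apply] at this ⊢
      rw [← this]
      refine Finset.sum_congr rfl fun e _ => ?_
      rw [rigRow_glue_castSucc]
    · intro w
      have := congrFun hg0 (w, Fin.last d)
      simp only [Finset.sum_apply, Pi.smul_apply, smul_eq_mul, Pi.zero_apply] at this
      rw [← this]
      refine Finset.sum_congr rfl fun e _ => ?_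
      rw [rigRow_glue_last]
  -- case on the kernel dimension
  have htri : Module.finrank ℝ ↥(LinearMap.ker T) = 0 ∨
      Module.finrank ℝ ↥(LinearMap.ker T) = 1 ∨
      Module.finrank ℝ ↥(LinearMap.ker T) = 2 := by omega
  rcases htri with ht | ht | ht
  · -- dimension 0 : kernel trivial
    rw [Submodule.finrank_eq_zero] at ht
    obtain ⟨lam, hlam0, hlamker, -⟩ := hdep 0
    rw [ht, Submodule.mem_bot] at hlamker
    exact hlam0 hlamker
  · -- dimension 1
    obtain ⟨v, hv0, hvspan⟩ := finrank_eq_one_iff'.1 ht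
    have hzero : ∀ h : V → ℝ, ∀ w : V,
        (∑ e : {x // x ∈ s}, (v : {x // x ∈ s} → ℝ) e * Nrow h (e : Sym2 V) w) = 0 := by
      intro h w
      obtain ⟨lam, hlam0, hlamker, hlamN⟩ := hdep h
      obtain ⟨c, hc⟩ := hvspan ⟨lam, hlamker⟩
      have hlameq : lam = c • (v : {x // x ∈ s} → ℝ) := by
        have := congrArg (Subtype.val) hc
        exact this.symm
      have hc0 : c ≠ 0 := by
        intro h0
        rw [h0, zero_smul] at hlameq
        exact hlam0 hlameq
      have := hlamN w
      rw [hlameq] at this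
      simp only [Pi.smul_apply, smul_eq_mul] at this
      rw [Finset.sum_congr rfl (fun e _ => by ring :
        ∀ e ∈ Finset.univ, c * (v : {x // x ∈ s} → ℝ) e * Nrow h (e : Sym2 V) w =
          c * ((v : {x // x ∈ s} → ℝ) e * Nrow h (e : Sym2 V) w)), ← Finset.mul_sum] at this
      exact (mul_eq_zero.1 this).resolve_left hc0
    have : (v : {x // x ∈ s} → ℝ) = 0 := lam_zero_of_Nsum hssimple _ hzero
    exact hv0 (Subtype.ext this)
  · -- dimension 2
    set b : Module.Basis (Fin 2) ℝ ↥(LinearMap.ker T) := Module.finBasisOfFinrankEq ℝ _ ht with hb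
    set μ : Fin 2 → ({x // x ∈ s} → ℝ) := fun i => ((b i : ↥(LinearMap.ker T)) : {x // x ∈ s} → ℝ)
      with hμ
    set A : Matrix V V ℝ := Lmat s (μ 0) with hA
    set B : Matrix V V ℝ := Lmat s (μ 1) with hB
    have hdepAB : ∀ h : V → ℝ, pairDep (A *ᵥ h) (B *ᵥ h) := by
      intro h
      obtain ⟨lam, hlam0, hlamker, hlamN⟩ := hdep h
      set x : ↥(LinearMap.ker T) := ⟨lam, hlamker⟩ with hx
      have hxrepr : (b.repr x 0) • b 0 + (b.repr x 1) • b 1 = x := by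
        have := b.sum_repr x
        rwa [Fin.sum_univ_two] at this
      have hlameq : lam = (b.repr x 0) • μ 0 + (b.repr x 1) • μ 1 := by
        have := congrArg Subtype.val hxrepr
        exact this.symm
      refine ⟨(b.repr x 0, b.repr x 1), ?_, ?_⟩
      · intro h0
        apply hlam0
        rw [hlameq,
          show b.repr x 0 = 0 from congrArg Prod.fst h0,
          show b.repr x 1 = 0 from congrArg Prod.snd h0]
        simp
      · funext w
        simp only [Pi.add_apply, Pi.smul_apply, Pi.zero_apply, smul_eq_mul]
        rw [hA, hB, Lmat_mulVec, Lmat_mulVec]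
        have hw := hlamN w
        rw [hlameq] at hw
        have hterm : ∀ e ∈ (Finset.univ : Finset {x // x ∈ s}),
            ((b.repr x 0) • μ 0 + (b.repr x 1) • μ 1) e * Nrow h (e : Sym2 V) w =
              (b.repr x 0) * (μ 0 e * Nrow h (e : Sym2 V) w) +
                (b.repr x 1) * (μ 1 e * Nrow h (e : Sym2 V) w) := by
          intro e _
          simp only [Pi.add_apply, Pi.smul_apply, smul_eq_mul]
          ring
        rw [Finset.sum_congr rfl hterm] at hw
        rw [Finset.sum_add_distrib, ← Finset.mul_sum, ← Finset.mul_sum] at hw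
        exact hw
    obtain ⟨c, hc0, hcAB⟩ := sym_pair (Lmat_symm (μ 0)) (Lmat_symm (μ 1)) hdepAB
    have hcomb : Lmat s (c.1 • μ 0 + c.2 • μ 1) = 0 := by
      rw [Lmat_smul_add]
      exact hcAB
    have hzero : c.1 • μ 0 + c.2 • μ 1 = 0 := Lmat_eq_zero_imp hssimple _ hcomb
    -- contradicts the independence of the basis
    have hbsub : c.1 • b 0 + c.2 • b 1 = 0 := by
      apply Subtype.ext
      simpa using hzero
    have hli := b.linearIndependent
    have := Fintype.linearIndependent_iff.1 hli ![c.1, c.2] (by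
      rw [Fin.sum_univ_two]
      simpa using hbsub)
    apply hc0
    have h1 := this 0
    have h2 := this 1
    simp only [Matrix.cons_val_zero, Matrix.cons_val_one, Matrix.head_cons] at h1 h2
    exact Prod.ext h1 h2


end MainAux

/-- Corollary 4.11: adding at most two edges to an `R_d`-independent graph yields
an `R_{d+1}`-independent graph. -/
theorem add_two_edges_independent
    (d : ℕ) (hd : 1 ≤ d)
    {V : Type*} [Fintype V] [DecidableEq V]
    (E F : Finset (Sym2 V))
    (hEsimple : ∀ e ∈ E, ¬ e.IsDiag) (hFsimple : ∀ e ∈ F, ¬ e.IsDiag)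
    (hdisj : Disjoint E F) (hFcard : F.card ≤ 2)
    (p : V → Fin d → ℝ) (hp : Generic d p)
    (hind : rrk d p ↑E = E.card)
    (q : V → Fin (d+1) → ℝ) (hq : Generic (d+1) q) :
    rrk (d+1) q ↑(E ∪ F) = (E ∪ F).card := by
  classical
  have hindEfam : LinearIndependent ℝ fun e : E => rigRow d p e :=
    linearIndependent_of_rrk_eq_card hind
  obtain ⟨h, hli⟩ := exists_glue_independent d E F hEsimple hFsimple hdisj hFcard p hindEfam
  have hliq : LinearIndependent ℝ fun e : (E ∪ F : Finset (Sym2 V)) => rigRow (d+1) q e :=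
    linearIndependent_of_specialization (d+1) (E ∪ F) (glue d p h) q hq hli
  exact rrk_eq_card_of_linearIndependent hliq
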